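/- Let h_X and h_Y be support profiles. Then the integrated covariance of the full support profiles involves no cross-terms: ∫_{S^{d-1}} Cov(h_X(·,u), h_Y(·,u)) dσ(u) = Cov_size(X,Y) + Cov_loc(X,Y). In particular, ∫_{S^{d-1}} Var(h_X(·,u)) dσ(u) = Var_size(X) + Var_loc(X). -/

import Mathlib

open MeasureTheory
open scoped RealInnerProductSpace

noncomputable section

/-- The unit sphere `S^{d-1}` in Euclidean space `ℝ^d`. -/
abbrev Sph (d : ℕ) := Metric.sphere (0 : EuclideanSpace ℝ (Fin d)) 1

/-- Covariance of two real random variables w.r.t. a measure `P`. -/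
def cov' {Ω : Type*} [MeasurableSpace Ω] (P : Measure Ω) (X Y : Ω → ℝ) : ℝ :=
  ∫ ω, (X ω - ∫ x, X x ∂P) * (Y ω - ∫ x, Y x ∂P) ∂P

/-- Variance of a real random variable w.r.t. a measure `P`. -/
def var' {Ω : Type*} [MeasurableSpace Ω] (P : Measure Ω) (X : Ω → ℝ) : ℝ := cov' P X X

/-- Size (even) component of a support profile. -/
def evenPart {Ω : Type*} {d : ℕ} (h : Ω × Sph d → ℝ) : Ω × Sph d → ℝ :=
  fun p => (h p + h (p.1, -p.2)) / 2

/-- Location (odd) component of a support profile. -/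
def oddPart {Ω : Type*} {d : ℕ} (h : Ω × Sph d → ℝ) : Ω × Sph d → ℝ :=
  fun p => (h p - h (p.1, -p.2)) / 2

/-- Size covariance `Cov_size(X,Y)`. -/
def covSize {Ω : Type*} [MeasurableSpace Ω] {d : ℕ} (P : Measure Ω) (σ : Measure (Sph d))
    (hX hY : Ω × Sph d → ℝ) : ℝ :=
  ∫ u, cov' P (fun ω => evenPart hX (ω, u)) (fun ω => evenPart hY (ω, u)) ∂σ

/-- Location covariance `Cov_loc(X,Y)`. -/
def covLoc {Ω : Type*} [MeasurableSpace Ω] {d : ℕ} (P : Measure Ω) (σ : Measure (Sph d))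
    (hX hY : Ω × Sph d → ℝ) : ℝ :=
  ∫ u, cov' P (fun ω => oddPart hX (ω, u)) (fun ω => oddPart hY (ω, u)) ∂σ

/-- Total covariance `Cov_tot(X,Y)`. -/
def covTot {Ω : Type*} [MeasurableSpace Ω] {d : ℕ} (P : Measure Ω) (σ : Measure (Sph d))
    (hX hY : Ω × Sph d → ℝ) : ℝ :=
  covSize P σ hX hY + covLoc P σ hX hY

/-- `Var_size(X)`. -/
def varSize {Ω : Type*} [MeasurableSpace Ω] {d : ℕ} (P : Measure Ω) (σ : Measure (Sph d))
    (hX : Ω × Sph d → ℝ) : ℝ := covSize P σ hX hX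

/-- `Var_loc(X)`. -/
def varLoc {Ω : Type*} [MeasurableSpace Ω] {d : ℕ} (P : Measure Ω) (σ : Measure (Sph d))
    (hX : Ω × Sph d → ℝ) : ℝ := covLoc P σ hX hX

/-- `Var_tot(X)`. -/
def varTot {Ω : Type*} [MeasurableSpace Ω] {d : ℕ} (P : Measure Ω) (σ : Measure (Sph d))
    (hX : Ω × Sph d → ℝ) : ℝ := varSize P σ hX + varLoc P σ hX

/-- A support profile: jointly measurable and square-integrable against `P ⊗ σ`. -/
def IsSupportProfile {Ω : Type*} [MeasurableSpace Ω] {d : ℕ} (P : Measure Ω)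
    (σ : Measure (Sph d)) (h : Ω × Sph d → ℝ) : Prop :=
  Measurable h ∧ Integrable (fun p => (h p) ^ 2) (P.prod σ)
section Auxiliary

variable {Ω : Type*} [MeasurableSpace Ω] {P : Measure Ω}

lemma integrable_mul_L2 {f g : Ω → ℝ} (hf : MeasureTheory.MemLp f 2 P)
    (hg : MeasureTheory.MemLp g 2 P) : Integrable (fun ω => f ω * g ω) P := by
  have hf2 : Integrable (fun ω => f ω ^ 2) P :=
    (MeasureTheory.memLp_two_iff_integrable_sq hf.1).mp hf
  have hg2 : Integrable (fun ω => g ω ^ 2) P :=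
    (MeasureTheory.memLp_two_iff_integrable_sq hg.1).mp hg
  refine ((hf2.add hg2).div_const 2).mono' (hf.1.mul hg.1) ?_
  filter_upwards with ω
  simp only [Pi.add_apply, Real.norm_eq_abs]
  nlinarith [sq_nonneg (|f ω| - |g ω|), abs_mul (f ω) (g ω), sq_abs (f ω), sq_abs (g ω),
    abs_nonneg (f ω), abs_nonneg (g ω)]

lemma memLp2_half_add {f g : Ω → ℝ} (hf : MeasureTheory.MemLp f 2 P)
    (hg : MeasureTheory.MemLp g 2 P) :
    MeasureTheory.MemLp (fun ω => (f ω + g ω) / 2) 2 P := by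
  have h := (hf.add hg).const_mul (2⁻¹ : ℝ)
  have heq : (fun x => (2⁻¹ : ℝ) * (f + g) x) = fun ω => (f ω + g ω) / 2 := by
    funext ω; simp [Pi.add_apply]; ring
  rwa [heq] at h

lemma memLp2_half_sub {f g : Ω → ℝ} (hf : MeasureTheory.MemLp f 2 P)
    (hg : MeasureTheory.MemLp g 2 P) :
    MeasureTheory.MemLp (fun ω => (f ω - g ω) / 2) 2 P := by
  have h := (hf.sub hg).const_mul (2⁻¹ : ℝ)
  have heq : (fun x => (2⁻¹ : ℝ) * (f - g) x) = fun ω => (f ω - g ω) / 2 := by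
    funext ω; simp [Pi.sub_apply]; ring
  rwa [heq] at h

lemma integral_centered_sq_le [IsProbabilityMeasure P] {f : Ω → ℝ}
    (hf : MeasureTheory.MemLp f 2 P) :
    ∫ ω, (f ω - ∫ x, f x ∂P) ^ 2 ∂P ≤ ∫ ω, f ω ^ 2 ∂P := by
  set c := ∫ x, f x ∂P with hc
  have hf1 : Integrable f P := hf.integrable one_le_two
  have hf2 : Integrable (fun ω => f ω ^ 2) P :=
    (MeasureTheory.memLp_two_iff_integrable_sq hf.1).mp hf
  have heq : (fun ω => (f ω - c) ^ 2) = fun ω => (f ω ^ 2 - 2 * c * f ω) + c ^ 2 := by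
    funext ω; ring
  have hint : Integrable (fun ω => f ω ^ 2 - 2 * c * f ω) P := hf2.sub (hf1.const_mul (2 * c))
  rw [heq, integral_add hint (integrable_const _),
    integral_sub hf2 (hf1.const_mul (2 * c)), integral_const_mul, integral_const]
  simp only [measure_univ, probReal_univ, smul_eq_mul, one_mul]
  nlinarith [sq_nonneg c]

lemma abs_cov'_le [IsProbabilityMeasure P] {f g : Ω → ℝ}
    (hf : MeasureTheory.MemLp f 2 P) (hg : MeasureTheory.MemLp g 2 P) :
    |cov' P f g| ≤ (∫ ω, f ω ^ 2 ∂P) + ∫ ω, g ω ^ 2 ∂P := by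
  set cf := ∫ x, f x ∂P with hcf
  set cg := ∫ x, g x ∂P with hcg
  have hft : MeasureTheory.MemLp (fun ω => f ω - cf) 2 P := hf.sub (MeasureTheory.memLp_const cf)
  have hgt : MeasureTheory.MemLp (fun ω => g ω - cg) 2 P := hg.sub (MeasureTheory.memLp_const cg)
  have hI : Integrable (fun ω => (f ω - cf) * (g ω - cg)) P := integrable_mul_L2 hft hgt
  have hft2 : Integrable (fun ω => (f ω - cf) ^ 2) P :=
    (MeasureTheory.memLp_two_iff_integrable_sq hft.1).mp hft
  have hgt2 : Integrable (fun ω => (g ω - cg) ^ 2) P :=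
    (MeasureTheory.memLp_two_iff_integrable_sq hgt.1).mp hgt
  have h1 : |cov' P f g| ≤ ∫ ω, |(f ω - cf) * (g ω - cg)| ∂P := by
    have h0 := norm_integral_le_integral_norm (μ := P) (f := fun ω => (f ω - cf) * (g ω - cg))
    simp only [Real.norm_eq_abs] at h0
    rw [cov', ← hcf, ← hcg]
    exact h0
  have h2 : ∫ ω, |(f ω - cf) * (g ω - cg)| ∂P
      ≤ ∫ ω, ((f ω - cf) ^ 2 + (g ω - cg) ^ 2) / 2 ∂P := by
    refine integral_mono hI.abs ((hft2.add hgt2).div_const 2) fun ω => ?_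
    nlinarith [sq_nonneg (|f ω - cf| - |g ω - cg|), abs_mul (f ω - cf) (g ω - cg),
      sq_abs (f ω - cf), sq_abs (g ω - cg), abs_nonneg (f ω - cf), abs_nonneg (g ω - cg)]
  have h3 : ∫ ω, ((f ω - cf) ^ 2 + (g ω - cg) ^ 2) / 2 ∂P
      = ((∫ ω, (f ω - cf) ^ 2 ∂P) + ∫ ω, (g ω - cg) ^ 2 ∂P) / 2 := by
    rw [integral_div, integral_add hft2 hgt2]
  have h4 := integral_centered_sq_le hf
  have h5 := integral_centered_sq_le hg
  have h6 : (0 : ℝ) ≤ ∫ ω, (f ω - cf) ^ 2 ∂P := integral_nonneg fun ω => sq_nonneg _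
  have h7 : (0 : ℝ) ≤ ∫ ω, (g ω - cg) ^ 2 ∂P := integral_nonneg fun ω => sq_nonneg _
  rw [← hcf] at h4
  rw [← hcg] at h5
  linarith

lemma cov'_parity [IsProbabilityMeasure P] (a b c e : Ω → ℝ)
    (ha : MeasureTheory.MemLp a 2 P) (hb : MeasureTheory.MemLp b 2 P)
    (hc : MeasureTheory.MemLp c 2 P) (he : MeasureTheory.MemLp e 2 P) :
    cov' P (fun ω => (a ω + b ω) / 2) (fun ω => (c ω + e ω) / 2)
      + cov' P (fun ω => (a ω - b ω) / 2) (fun ω => (c ω - e ω) / 2)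
    = (cov' P a c + cov' P b e) / 2 := by
  have ha1 : Integrable a P := ha.integrable one_le_two
  have hb1 : Integrable b P := hb.integrable one_le_two
  have hc1 : Integrable c P := hc.integrable one_le_two
  have he1 : Integrable e P := he.integrable one_le_two
  have hat : MeasureTheory.MemLp (fun ω => a ω - ∫ x, a x ∂P) 2 P :=
    ha.sub (MeasureTheory.memLp_const _)
  have hbt : MeasureTheory.MemLp (fun ω => b ω - ∫ x, b x ∂P) 2 P :=
    hb.sub (MeasureTheory.memLp_const _)
  have hct : MeasureTheory.MemLp (fun ω => c ω - ∫ x, c x ∂P) 2 P :=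
    hc.sub (MeasureTheory.memLp_const _)
  have het : MeasureTheory.MemLp (fun ω => e ω - ∫ x, e x ∂P) 2 P :=
    he.sub (MeasureTheory.memLp_const _)
  have I3 : Integrable (fun ω => (a ω - ∫ x, a x ∂P) * (c ω - ∫ x, c x ∂P)) P :=
    integrable_mul_L2 hat hct
  have I4 : Integrable (fun ω => (b ω - ∫ x, b x ∂P) * (e ω - ∫ x, e x ∂P)) P :=
    integrable_mul_L2 hbt het
  have Ip : Integrable (fun ω => ((a ω - ∫ x, a x ∂P) + (b ω - ∫ x, b x ∂P))
      * ((c ω - ∫ x, c x ∂P) + (e ω - ∫ x, e x ∂P))) P :=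
    integrable_mul_L2 (hat.add hbt) (hct.add het)
  have Im : Integrable (fun ω => ((a ω - ∫ x, a x ∂P) - (b ω - ∫ x, b x ∂P))
      * ((c ω - ∫ x, c x ∂P) - (e ω - ∫ x, e x ∂P))) P :=
    integrable_mul_L2 (hat.sub hbt) (hct.sub het)
  have hma : (∫ x, (a x + b x) / 2 ∂P) = ((∫ x, a x ∂P) + ∫ x, b x ∂P) / 2 := by
    rw [integral_div, integral_add ha1 hb1]
  have hmc : (∫ x, (c x + e x) / 2 ∂P) = ((∫ x, c x ∂P) + ∫ x, e x ∂P) / 2 := by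
    rw [integral_div, integral_add hc1 he1]
  have hms : (∫ x, (a x - b x) / 2 ∂P) = ((∫ x, a x ∂P) - ∫ x, b x ∂P) / 2 := by
    rw [integral_div, integral_sub ha1 hb1]
  have hme : (∫ x, (c x - e x) / 2 ∂P) = ((∫ x, c x ∂P) - ∫ x, e x ∂P) / 2 := by
    rw [integral_div, integral_sub hc1 he1]
  have hcov1 : cov' P (fun ω => (a ω + b ω) / 2) (fun ω => (c ω + e ω) / 2)
      = (∫ ω, ((a ω - ∫ x, a x ∂P) + (b ω - ∫ x, b x ∂P))
          * ((c ω - ∫ x, c x ∂P) + (e ω - ∫ x, e x ∂P)) ∂P) / 4 := by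
    rw [cov', hma, hmc, ← integral_div]
    exact integral_congr_ae (Filter.Eventually.of_forall fun ω => by ring)
  have hcov2 : cov' P (fun ω => (a ω - b ω) / 2) (fun ω => (c ω - e ω) / 2)
      = (∫ ω, ((a ω - ∫ x, a x ∂P) - (b ω - ∫ x, b x ∂P))
          * ((c ω - ∫ x, c x ∂P) - (e ω - ∫ x, e x ∂P)) ∂P) / 4 := by
    rw [cov', hms, hme, ← integral_div]
    exact integral_congr_ae (Filter.Eventually.of_forall fun ω => by ring)
  rw [hcov1, hcov2, ← add_div, ← integral_add Ip Im]
  have h5 : (∫ ω, (((a ω - ∫ x, a x ∂P) + (b ω - ∫ x, b x ∂P))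
        * ((c ω - ∫ x, c x ∂P) + (e ω - ∫ x, e x ∂P))
      + ((a ω - ∫ x, a x ∂P) - (b ω - ∫ x, b x ∂P))
        * ((c ω - ∫ x, c x ∂P) - (e ω - ∫ x, e x ∂P))) ∂P)
      = 2 * cov' P a c + 2 * cov' P b e := by
    have hpt : ∀ ω, (((a ω - ∫ x, a x ∂P) + (b ω - ∫ x, b x ∂P))
        * ((c ω - ∫ x, c x ∂P) + (e ω - ∫ x, e x ∂P))
      + ((a ω - ∫ x, a x ∂P) - (b ω - ∫ x, b x ∂P))
        * ((c ω - ∫ x, c x ∂P) - (e ω - ∫ x, e x ∂P)))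
        = 2 * ((a ω - ∫ x, a x ∂P) * (c ω - ∫ x, c x ∂P))
          + 2 * ((b ω - ∫ x, b x ∂P) * (e ω - ∫ x, e x ∂P)) := fun ω => by ring
    simp only [hpt]
    rw [integral_add (I3.const_mul 2) (I4.const_mul 2), integral_const_mul, integral_const_mul]
    rfl
  rw [h5]
  ring

lemma cov'_section_sm [SFinite P] {d : ℕ} (k l : Ω × Sph d → ℝ)
    (hk : Measurable k) (hl : Measurable l) :
    MeasureTheory.StronglyMeasurable
      (fun u : Sph d => cov' P (fun ω => k (ω, u)) (fun ω => l (ω, u))) := by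
  have hmk : MeasureTheory.StronglyMeasurable (fun u : Sph d => ∫ ω, k (ω, u) ∂P) :=
    hk.stronglyMeasurable.integral_prod_left'
  have hml : MeasureTheory.StronglyMeasurable (fun u : Sph d => ∫ ω, l (ω, u) ∂P) :=
    hl.stronglyMeasurable.integral_prod_left'
  have hF : MeasureTheory.StronglyMeasurable (fun p : Ω × Sph d =>
      (k p - ∫ ω, k (ω, p.2) ∂P) * (l p - ∫ ω, l (ω, p.2) ∂P)) :=
    (hk.stronglyMeasurable.sub (hmk.comp_measurable measurable_snd)).mul
      (hl.stronglyMeasurable.sub (hml.comp_measurable measurable_snd))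
  exact hF.integral_prod_left'

end Auxiliary
lemma key_split {Ω : Type*} [MeasurableSpace Ω] {d : ℕ}
    (P : Measure Ω) [IsProbabilityMeasure P]
    (σ : Measure (Sph d)) [IsProbabilityMeasure σ]
    (hσinv : Measure.map (fun u : Sph d => -u) σ = σ)
    (hX hY : Ω × Sph d → ℝ)
    (hXprof : IsSupportProfile P σ hX) (hYprof : IsSupportProfile P σ hY) :
    ∫ u, cov' P (fun ω => hX (ω, u)) (fun ω => hY (ω, u)) ∂σ
      = covSize P σ hX hY + covLoc P σ hX hY := by
  have hXm := hXprof.1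
  have hYm := hYprof.1
  have hneg : Measurable (fun u : Sph d => -u) :=
    (continuous_neg (G := Sph d)).measurable
  have hemb : MeasurableEmbedding (fun u : Sph d => -u) :=
    (MeasurableEquiv.mk (Equiv.neg (Sph d)) (measurable_toFun := hneg)
      (measurable_invFun := hneg)).measurableEmbedding
  have hmp : MeasurePreserving (fun u : Sph d => -u) σ σ := ⟨hneg, hσinv⟩
  have hnegp : Measurable (fun p : Ω × Sph d => (p.1, -p.2)) :=
    measurable_fst.prodMk (hneg.comp measurable_snd)
  have hXe : Measurable (evenPart hX) := by
    unfold evenPart; exact (hXm.add (hXm.comp hnegp)).div_const 2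
  have hYe : Measurable (evenPart hY) := by
    unfold evenPart; exact (hYm.add (hYm.comp hnegp)).div_const 2
  have hXo : Measurable (oddPart hX) := by
    unfold oddPart; exact (hXm.sub (hXm.comp hnegp)).div_const 2
  have hYo : Measurable (oddPart hY) := by
    unfold oddPart; exact (hYm.sub (hYm.comp hnegp)).div_const 2
  -- a.e. square-integrable sections
  have hXsec : ∀ᵐ u ∂σ, MeasureTheory.MemLp (fun ω => hX (ω, u)) 2 P := by
    filter_upwards [hXprof.2.prod_left_ae] with u hu
    exact (MeasureTheory.memLp_two_iff_integrable_sq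
      ((hXm.comp (measurable_id.prodMk measurable_const)).aestronglyMeasurable)).mpr hu
  have hYsec : ∀ᵐ u ∂σ, MeasureTheory.MemLp (fun ω => hY (ω, u)) 2 P := by
    filter_upwards [hYprof.2.prod_left_ae] with u hu
    exact (MeasureTheory.memLp_two_iff_integrable_sq
      ((hYm.comp (measurable_id.prodMk measurable_const)).aestronglyMeasurable)).mpr hu
  have negae : ∀ {Q : Sph d → Prop}, (∀ᵐ u ∂σ, Q u) → ∀ᵐ u ∂σ, Q (-u) := by
    intro Q h
    rw [← hσinv] at h
    exact ae_of_ae_map hneg.aemeasurable h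
  have hae : ∀ᵐ u ∂σ, MeasureTheory.MemLp (fun ω => hX (ω, u)) 2 P
      ∧ MeasureTheory.MemLp (fun ω => hX (ω, -u)) 2 P
      ∧ MeasureTheory.MemLp (fun ω => hY (ω, u)) 2 P
      ∧ MeasureTheory.MemLp (fun ω => hY (ω, -u)) 2 P := by
    filter_upwards [hXsec, negae hXsec, hYsec, negae hYsec] with u h1 h2 h3 h4
    exact ⟨h1, h2, h3, h4⟩
  -- dominating function
  have hGX : Integrable (fun u => ∫ ω, hX (ω, u) ^ 2 ∂P) σ := hXprof.2.integral_prod_right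
  have hGY : Integrable (fun u => ∫ ω, hY (ω, u) ^ 2 ∂P) σ := hYprof.2.integral_prod_right
  set G : Sph d → ℝ := fun u => (∫ ω, hX (ω, u) ^ 2 ∂P) + ∫ ω, hY (ω, u) ^ 2 ∂P with hGdef
  have hG : Integrable G σ := hGX.add hGY
  have hGneg : Integrable (fun u => G (-u)) σ := by
    have h0 : Integrable G (Measure.map (fun u : Sph d => -u) σ) := by rwa [hσinv]
    exact hemb.integrable_map_iff.mp h0
  have hM : Integrable (fun u => G u + G (-u)) σ := hG.add hGneg
  have hGpos : ∀ u, 0 ≤ G u := fun u =>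
    add_nonneg (integral_nonneg fun ω => sq_nonneg _) (integral_nonneg fun ω => sq_nonneg _)
  -- strong measurability of the covariance sections
  have hFsm := cov'_section_sm (P := P) hX hY hXm hYm
  have hAsm := cov'_section_sm (P := P) (evenPart hX) (evenPart hY) hXe hYe
  have hBsm := cov'_section_sm (P := P) (oddPart hX) (oddPart hY) hXo hYo
  -- integrability of F
  have hFbd : ∀ᵐ u ∂σ, ‖cov' P (fun ω => hX (ω, u)) (fun ω => hY (ω, u))‖ ≤ G u + G (-u) := by
    filter_upwards [hae] with u h
    have hb := abs_cov'_le h.1 h.2.2.1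
    have h0 := hGpos (-u)
    rw [Real.norm_eq_abs]
    simp only [hGdef]
    simp only [hGdef] at h0
    linarith
  have hFint : Integrable (fun u => cov' P (fun ω => hX (ω, u)) (fun ω => hY (ω, u))) σ :=
    hM.mono' hFsm.aestronglyMeasurable hFbd
  have hFneg : Integrable
      (fun u => cov' P (fun ω => hX (ω, -u)) (fun ω => hY (ω, -u))) σ := by
    have h0 : Integrable (fun u => cov' P (fun ω => hX (ω, u)) (fun ω => hY (ω, u)))
        (Measure.map (fun u : Sph d => -u) σ) := by rwa [hσinv]
    exact hemb.integrable_map_iff.mp h0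
  -- integrability of A and B
  have hsecmono : ∀ᵐ u ∂σ,
      (∫ ω, evenPart hX (ω, u) ^ 2 ∂P ≤ (∫ ω, hX (ω, u) ^ 2 ∂P) + ∫ ω, hX (ω, -u) ^ 2 ∂P)
      ∧ (∫ ω, evenPart hY (ω, u) ^ 2 ∂P ≤ (∫ ω, hY (ω, u) ^ 2 ∂P) + ∫ ω, hY (ω, -u) ^ 2 ∂P)
      ∧ (∫ ω, oddPart hX (ω, u) ^ 2 ∂P ≤ (∫ ω, hX (ω, u) ^ 2 ∂P) + ∫ ω, hX (ω, -u) ^ 2 ∂P)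
      ∧ (∫ ω, oddPart hY (ω, u) ^ 2 ∂P ≤ (∫ ω, hY (ω, u) ^ 2 ∂P) + ∫ ω, hY (ω, -u) ^ 2 ∂P) := by
    filter_upwards [hae] with u h
    obtain ⟨h1, h2, h3, h4⟩ := h
    have q1 : Integrable (fun ω => hX (ω, u) ^ 2) P :=
      (MeasureTheory.memLp_two_iff_integrable_sq h1.1).mp h1
    have q2 : Integrable (fun ω => hX (ω, -u) ^ 2) P :=
      (MeasureTheory.memLp_two_iff_integrable_sq h2.1).mp h2
    have q3 : Integrable (fun ω => hY (ω, u) ^ 2) P :=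
      (MeasureTheory.memLp_two_iff_integrable_sq h3.1).mp h3
    have q4 : Integrable (fun ω => hY (ω, -u) ^ 2) P :=
      (MeasureTheory.memLp_two_iff_integrable_sq h4.1).mp h4
    have eX : MeasureTheory.MemLp (fun ω => evenPart hX (ω, u)) 2 P := by
      simp only [evenPart]; exact memLp2_half_add h1 h2
    have eY : MeasureTheory.MemLp (fun ω => evenPart hY (ω, u)) 2 P := by
      simp only [evenPart]; exact memLp2_half_add h3 h4
    have oX : MeasureTheory.MemLp (fun ω => oddPart hX (ω, u)) 2 P := by
      simp only [oddPart]; exact memLp2_half_sub h1 h2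
    have oY : MeasureTheory.MemLp (fun ω => oddPart hY (ω, u)) 2 P := by
      simp only [oddPart]; exact memLp2_half_sub h3 h4
    have eX2 : Integrable (fun ω => evenPart hX (ω, u) ^ 2) P :=
      (MeasureTheory.memLp_two_iff_integrable_sq eX.1).mp eX
    have eY2 : Integrable (fun ω => evenPart hY (ω, u) ^ 2) P :=
      (MeasureTheory.memLp_two_iff_integrable_sq eY.1).mp eY
    have oX2 : Integrable (fun ω => oddPart hX (ω, u) ^ 2) P :=
      (MeasureTheory.memLp_two_iff_integrable_sq oX.1).mp oX
    have oY2 : Integrable (fun ω => oddPart hY (ω, u) ^ 2) P :=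
      (MeasureTheory.memLp_two_iff_integrable_sq oY.1).mp oY
    refine ⟨?_, ?_, ?_, ?_⟩
    · calc ∫ ω, evenPart hX (ω, u) ^ 2 ∂P
          ≤ ∫ ω, (hX (ω, u) ^ 2 + hX (ω, -u) ^ 2) ∂P := by
            refine integral_mono eX2 (q1.add q2) fun ω => ?_
            simp only [evenPart]; nlinarith [sq_nonneg (hX (ω, u) - hX (ω, -u))]
        _ = (∫ ω, hX (ω, u) ^ 2 ∂P) + ∫ ω, hX (ω, -u) ^ 2 ∂P := integral_add q1 q2
    · calc ∫ ω, evenPart hY (ω, u) ^ 2 ∂P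
          ≤ ∫ ω, (hY (ω, u) ^ 2 + hY (ω, -u) ^ 2) ∂P := by
            refine integral_mono eY2 (q3.add q4) fun ω => ?_
            simp only [evenPart]; nlinarith [sq_nonneg (hY (ω, u) - hY (ω, -u))]
        _ = (∫ ω, hY (ω, u) ^ 2 ∂P) + ∫ ω, hY (ω, -u) ^ 2 ∂P := integral_add q3 q4
    · calc ∫ ω, oddPart hX (ω, u) ^ 2 ∂P
          ≤ ∫ ω, (hX (ω, u) ^ 2 + hX (ω, -u) ^ 2) ∂P := by
            refine integral_mono oX2 (q1.add q2) fun ω => ?_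
            simp only [oddPart]; nlinarith [sq_nonneg (hX (ω, u) + hX (ω, -u))]
        _ = (∫ ω, hX (ω, u) ^ 2 ∂P) + ∫ ω, hX (ω, -u) ^ 2 ∂P := integral_add q1 q2
    · calc ∫ ω, oddPart hY (ω, u) ^ 2 ∂P
          ≤ ∫ ω, (hY (ω, u) ^ 2 + hY (ω, -u) ^ 2) ∂P := by
            refine integral_mono oY2 (q3.add q4) fun ω => ?_
            simp only [oddPart]; nlinarith [sq_nonneg (hY (ω, u) + hY (ω, -u))]
        _ = (∫ ω, hY (ω, u) ^ 2 ∂P) + ∫ ω, hY (ω, -u) ^ 2 ∂P := integral_add q3 q4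
  have haeE : ∀ᵐ u ∂σ, MeasureTheory.MemLp (fun ω => evenPart hX (ω, u)) 2 P
      ∧ MeasureTheory.MemLp (fun ω => evenPart hY (ω, u)) 2 P
      ∧ MeasureTheory.MemLp (fun ω => oddPart hX (ω, u)) 2 P
      ∧ MeasureTheory.MemLp (fun ω => oddPart hY (ω, u)) 2 P := by
    filter_upwards [hae] with u h
    obtain ⟨h1, h2, h3, h4⟩ := h
    refine ⟨?_, ?_, ?_, ?_⟩
    · simp only [evenPart]; exact memLp2_half_add h1 h2
    · simp only [evenPart]; exact memLp2_half_add h3 h4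
    · simp only [oddPart]; exact memLp2_half_sub h1 h2
    · simp only [oddPart]; exact memLp2_half_sub h3 h4
  have hAbd : ∀ᵐ u ∂σ, ‖cov' P (fun ω => evenPart hX (ω, u)) (fun ω => evenPart hY (ω, u))‖
      ≤ G u + G (-u) := by
    filter_upwards [hsecmono, haeE] with u hs hE
    have hb := abs_cov'_le hE.1 hE.2.1
    rw [Real.norm_eq_abs]
    simp only [hGdef]
    linarith [hs.1, hs.2.1]
  have hBbd : ∀ᵐ u ∂σ, ‖cov' P (fun ω => oddPart hX (ω, u)) (fun ω => oddPart hY (ω, u))‖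
      ≤ G u + G (-u) := by
    filter_upwards [hsecmono, haeE] with u hs hE
    have hb := abs_cov'_le hE.2.2.1 hE.2.2.2
    rw [Real.norm_eq_abs]
    simp only [hGdef]
    linarith [hs.2.2.1, hs.2.2.2]
  have hA : Integrable
      (fun u => cov' P (fun ω => evenPart hX (ω, u)) (fun ω => evenPart hY (ω, u))) σ :=
    hM.mono' hAsm.aestronglyMeasurable hAbd
  have hB : Integrable
      (fun u => cov' P (fun ω => oddPart hX (ω, u)) (fun ω => oddPart hY (ω, u))) σ :=
    hM.mono' hBsm.aestronglyMeasurable hBbd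
  -- pointwise parity identity
  have hpt : ∀ᵐ u ∂σ,
      cov' P (fun ω => evenPart hX (ω, u)) (fun ω => evenPart hY (ω, u))
        + cov' P (fun ω => oddPart hX (ω, u)) (fun ω => oddPart hY (ω, u))
      = (cov' P (fun ω => hX (ω, u)) (fun ω => hY (ω, u))
          + cov' P (fun ω => hX (ω, -u)) (fun ω => hY (ω, -u))) / 2 := by
    filter_upwards [hae] with u h
    have hp := cov'_parity (P := P) (fun ω => hX (ω, u)) (fun ω => hX (ω, -u))
      (fun ω => hY (ω, u)) (fun ω => hY (ω, -u)) h.1 h.2.1 h.2.2.1 h.2.2.2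
    simpa only [evenPart, oddPart] using hp
  -- conclusion
  have hcalc : covSize P σ hX hY + covLoc P σ hX hY
      = ∫ u, cov' P (fun ω => hX (ω, u)) (fun ω => hY (ω, u)) ∂σ := by
    calc covSize P σ hX hY + covLoc P σ hX hY
        = ∫ u, (cov' P (fun ω => evenPart hX (ω, u)) (fun ω => evenPart hY (ω, u))
            + cov' P (fun ω => oddPart hX (ω, u)) (fun ω => oddPart hY (ω, u))) ∂σ :=
          (integral_add hA hB).symm
      _ = ∫ u, (cov' P (fun ω => hX (ω, u)) (fun ω => hY (ω, u))
            + cov' P (fun ω => hX (ω, -u)) (fun ω => hY (ω, -u))) / 2 ∂σ :=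
          integral_congr_ae hpt
      _ = ((∫ u, cov' P (fun ω => hX (ω, u)) (fun ω => hY (ω, u)) ∂σ)
            + ∫ u, cov' P (fun ω => hX (ω, -u)) (fun ω => hY (ω, -u)) ∂σ) / 2 := by
          rw [integral_div, integral_add hFint hFneg]
      _ = ∫ u, cov' P (fun ω => hX (ω, u)) (fun ω => hY (ω, u)) ∂σ := by
          rw [hmp.integral_comp hemb
            (fun u => cov' P (fun ω => hX (ω, u)) (fun ω => hY (ω, u)))]
          ring
  exact hcalc.symm

/-- Additivity, no cross-terms: the integrated covariance of the full
support profiles splits exactly into size and location covariances; in particular the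
integrated variance splits into `Var_size + Var_loc`. -/
theorem covTot_no_cross_terms {Ω : Type*} [MeasurableSpace Ω] {d : ℕ} (hd : 0 < d)
    (P : Measure Ω) [IsProbabilityMeasure P]
    (σ : Measure (Sph d)) [IsProbabilityMeasure σ]
    (hσinv : Measure.map (fun u : Sph d => -u) σ = σ)
    (hX hY : Ω × Sph d → ℝ)
    (hXprof : IsSupportProfile P σ hX) (hYprof : IsSupportProfile P σ hY) :
    (∫ u, cov' P (fun ω => hX (ω, u)) (fun ω => hY (ω, u)) ∂σ
        = covSize P σ hX hY + covLoc P σ hX hY)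
    ∧ (∫ u, var' P (fun ω => hX (ω, u)) ∂σ = varSize P σ hX + varLoc P σ hX) :=
  ⟨key_split P σ hσinv hX hY hXprof hYprof,
   key_split P σ hσinv hX hX hXprof hXprof⟩

end
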